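/- Let X be a finite topological space. The set Cov(X) of basis-like open covers of X, ordered by the relation U ≥_C V (meaning: U refines V and there exists an order-preserving map p : U → V, with respect to set inclusion, such that U ⊆ p(U) for every U ∈ U), is a directed set: the relation is reflexive and transitive, and any two elements have a common upper bound; in fact B(X) ≥_C U for every U ∈ Cov(X). -/

import Mathlib

/-- `minNhd x` is the intersection of all open sets containing `x`. -/
def minNhd {X : Type*} [TopologicalSpace X] (x : X) : Set X :=
  ⋂₀ {U : Set X | IsOpen U ∧ x ∈ U}

/-- `𝒰` is a basis-like (finite) open cover: a finite open cover such that whenever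
`x ∈ u ∩ v` with `u, v ∈ 𝒰` there is `w ∈ 𝒰` with `x ∈ w ⊆ u ∩ v`. -/
def IsBasisLikeCover {X : Type*} [TopologicalSpace X] (𝒰 : Set (Set X)) : Prop :=
  𝒰.Finite ∧ (∀ u ∈ 𝒰, IsOpen u) ∧ ⋃₀ 𝒰 = Set.univ ∧
    ∀ u ∈ 𝒰, ∀ v ∈ 𝒰, ∀ x ∈ u ∩ v, ∃ w ∈ 𝒰, x ∈ w ∧ w ⊆ u ∩ v

/-- `𝒰 ≥_C 𝒱`: `𝒰` refines `𝒱` and there is an order-preserving map `p : 𝒰 → 𝒱`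
(for set inclusion) with `u ⊆ p u` for every `u ∈ 𝒰`. -/
def GeC {X : Type*} (𝒰 𝒱 : Set (Set X)) : Prop :=
  (∀ u ∈ 𝒰, ∃ v ∈ 𝒱, u ⊆ v) ∧
    ∃ p : Set X → Set X,
      (∀ u ∈ 𝒰, p u ∈ 𝒱 ∧ u ⊆ p u) ∧
      ∀ u ∈ 𝒰, ∀ u' ∈ 𝒰, u ⊆ u' → p u ⊆ p u'

lemma mem_minNhd {X : Type*} [TopologicalSpace X] (x : X) : x ∈ minNhd x := by
  intro U hU; exact hU.2

lemma minNhd_isOpen {X : Type*} [TopologicalSpace X] [Finite X] (x : X) :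
    IsOpen (minNhd x) :=
  Set.Finite.isOpen_sInter (Set.toFinite _) (fun _ h => h.1)

lemma minNhd_subset {X : Type*} [TopologicalSpace X] {x : X} {U : Set X}
    (hU : IsOpen U) (hx : x ∈ U) : minNhd x ⊆ U :=
  Set.sInter_subset_of_mem ⟨hU, hx⟩

/-- In a basis-like cover, the intersection of all members containing `x` is a member. -/
lemma min_mem {X : Type*} [TopologicalSpace X] {𝒰 : Set (Set X)}
    (h : IsBasisLikeCover 𝒰) (x : X) :
    ⋂₀ {u | u ∈ 𝒰 ∧ x ∈ u} ∈ 𝒰 ∧ x ∈ ⋂₀ {u | u ∈ 𝒰 ∧ x ∈ u} := by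
  obtain ⟨hfin, hopen, hcov, hbl⟩ := h
  set S : Set (Set X) := {u | u ∈ 𝒰 ∧ x ∈ u} with hS
  have hSfin : S.Finite := hfin.subset (fun u hu => hu.1)
  have key : ∃ w ∈ 𝒰, x ∈ w ∧ w ⊆ ⋂₀ S := by
    refine Set.Finite.induction_on_subset (motive := fun T _ => ∃ w ∈ 𝒰, x ∈ w ∧ w ⊆ ⋂₀ T) S hSfin ?_ ?_
    · have : x ∈ ⋃₀ 𝒰 := by rw [hcov]; trivial
      obtain ⟨u, hu, hxu⟩ := this
      exact ⟨u, hu, hxu, by simp⟩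
    · rintro a T haS _ _ ⟨w, hw, hxw, hwT⟩
      obtain ⟨w', hw', hxw', hw'sub⟩ := hbl a haS.1 w hw x ⟨haS.2, hxw⟩
      refine ⟨w', hw', hxw', ?_⟩
      rw [Set.sInter_insert]
      exact Set.subset_inter (hw'sub.trans Set.inter_subset_left)
        ((hw'sub.trans Set.inter_subset_right).trans hwT)
  obtain ⟨w, hw, hxw, hwS⟩ := key
  have hwmem : w ∈ S := ⟨hw, hxw⟩
  have : ⋂₀ S ⊆ w := Set.sInter_subset_of_mem hwmem
  have heq : ⋂₀ S = w := Set.Subset.antisymm this hwS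
  rw [heq]
  exact ⟨hw, hxw⟩

lemma geC_range_minNhd {X : Type*} [TopologicalSpace X] [Finite X]
    {𝒰 : Set (Set X)} (h : IsBasisLikeCover 𝒰) :
    GeC (Set.range fun x : X => minNhd x) 𝒰 := by
  set p : Set X → Set X := fun U => ⋂₀ {u | u ∈ 𝒰 ∧ U ⊆ u} with hp
  have hkey : ∀ x : X, {u | u ∈ 𝒰 ∧ minNhd x ⊆ u} = {u | u ∈ 𝒰 ∧ x ∈ u} := by
    intro x
    ext u
    exact ⟨fun ⟨hu, hsub⟩ => ⟨hu, hsub (mem_minNhd x)⟩,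
      fun ⟨hu, hxu⟩ => ⟨hu, minNhd_subset (h.2.1 u hu) hxu⟩⟩
  have hprop : ∀ U ∈ Set.range (fun x : X => minNhd x), p U ∈ 𝒰 ∧ U ⊆ p U := by
    rintro U ⟨x, rfl⟩
    have := min_mem h x
    constructor
    · simp only [hp, hkey x]; exact this.1
    · simp only [hp, hkey x]
      exact minNhd_subset (h.2.1 _ this.1) this.2
  refine ⟨fun u hu => ⟨p u, (hprop u hu).1, (hprop u hu).2⟩, p, hprop, ?_⟩
  intro u _ u' _ huu'
  exact Set.sInter_subset_sInter (fun v hv => ⟨hv.1, huu'.trans hv.2⟩)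

lemma range_minNhd_basisLike {X : Type*} [TopologicalSpace X] [Finite X] :
    IsBasisLikeCover (Set.range fun x : X => minNhd x) := by
  refine ⟨Set.finite_range _, ?_, ?_, ?_⟩
  · rintro u ⟨x, rfl⟩; exact minNhd_isOpen x
  · ext x
    simp only [Set.mem_univ, iff_true, Set.mem_sUnion]
    exact ⟨minNhd x, ⟨x, rfl⟩, mem_minNhd x⟩
  · rintro u ⟨y, rfl⟩ v ⟨z, rfl⟩ x ⟨hxy, hxz⟩
    exact ⟨minNhd x, ⟨x, rfl⟩, mem_minNhd x,
      Set.subset_inter (minNhd_subset (minNhd_isOpen y) hxy)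
        (minNhd_subset (minNhd_isOpen z) hxz)⟩

/-- For a finite topological space `X`, the set of basis-like open covers ordered by
`≥_C` is a directed set: `≥_C` is reflexive and transitive, any two covers have a
common upper bound, and in fact `B(X) = {minNhd x | x ∈ X}` satisfies
`B(X) ≥_C 𝒰` for every basis-like open cover `𝒰`. -/
theorem covers_directed_finite (X : Type*) [TopologicalSpace X] [Finite X] :
    (∀ 𝒰 : Set (Set X), IsBasisLikeCover 𝒰 → GeC 𝒰 𝒰) ∧
    (∀ 𝒰 𝒱 𝒲 : Set (Set X), IsBasisLikeCover 𝒰 → IsBasisLikeCover 𝒱 →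
      IsBasisLikeCover 𝒲 → GeC 𝒰 𝒱 → GeC 𝒱 𝒲 → GeC 𝒰 𝒲) ∧
    (∀ 𝒰 𝒱 : Set (Set X), IsBasisLikeCover 𝒰 → IsBasisLikeCover 𝒱 →
      ∃ 𝒲 : Set (Set X), IsBasisLikeCover 𝒲 ∧ GeC 𝒲 𝒰 ∧ GeC 𝒲 𝒱) ∧
    (∀ 𝒰 : Set (Set X), IsBasisLikeCover 𝒰 →
      GeC (Set.range fun x : X => minNhd x) 𝒰) := by
  refine ⟨?_, ?_, ?_, fun 𝒰 h => geC_range_minNhd h⟩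
  · intro 𝒰 _
    exact ⟨fun u hu => ⟨u, hu, le_refl _⟩, id, fun u hu => ⟨hu, le_refl _⟩,
      fun u _ u' _ h => h⟩
  · rintro 𝒰 𝒱 𝒲 _ _ _ ⟨_, p, hp, hpm⟩ ⟨hr, q, hq, hqm⟩
    refine ⟨fun u hu => ⟨q (p u), (hq _ (hp u hu).1).1,
      (hp u hu).2.trans (hq _ (hp u hu).1).2⟩, q ∘ p, ?_, ?_⟩
    · intro u hu
      exact ⟨(hq _ (hp u hu).1).1, (hp u hu).2.trans (hq _ (hp u hu).1).2⟩
    · intro u hu u' hu' huu'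
      exact hqm _ (hp u hu).1 _ (hp u' hu').1 (hpm u hu u' hu' huu')
  · intro 𝒰 𝒱 h𝒰 h𝒱
    exact ⟨Set.range fun x : X => minNhd x, range_minNhd_basisLike,
      geC_range_minNhd h𝒰, geC_range_minNhd h𝒱⟩
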